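/- Let n be a positive integer and p an integer with gcd(p, n) = 1. Then the cyclically presented group G_n(0,p), defined by the relators x_i x_i x_{i+p} = x_i² x_{i+p} for i modulo n, is cyclic of order s = 2^n − (−1)^n, generated by the image of x_0. Moreover, the shift automorphism θ of G_n(0,p) fixes a subgroup of order three pointwise: there exists g ∈ G_n(0,p) of order 3 with θ(g) = g (namely g = x_0^{s/3}). -/

import Mathlib

namespace CPG

/-- The free group on generators `x_0, …, x_{n-1}` indexed by `ZMod n`. -/
abbrev FG (n : ℕ) := FreeGroup (ZMod n)

/-- The automorphism of the free group sending `x_j` to `x_{j+i}`. -/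
def shiftA (n : ℕ) (i : ZMod n) : MulAut (FG n) :=
  FreeGroup.freeGroupCongr (Equiv.addRight i)

/-- The shift automorphism `θ` of the free group, `x_j ↦ x_{j+1}`. -/
def shiftAut (n : ℕ) : MulAut (FG n) := shiftA n 1

/-- The `θ`-orbit of a word `w`: the relator set of the cyclic presentation `P_n(w)`. -/
def rels (n : ℕ) (w : FG n) : Set (FG n) := Set.range fun i : ZMod n => shiftA n i w

/-- The cyclically presented group `G_n(w)`. -/
abbrev Gp (n : ℕ) (w : FG n) := PresentedGroup (rels n w)

lemma shiftA_shiftA (n : ℕ) (i j : ZMod n) (x : FG n) :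
    shiftA n i (shiftA n j x) = shiftA n (j + i) x := by
  show FreeGroup.map _ (FreeGroup.map _ x) = FreeGroup.map _ x
  rw [FreeGroup.map.comp]
  have h : (⇑(Equiv.addRight i) ∘ ⇑(Equiv.addRight j)) = ⇑(Equiv.addRight (j + i)) := by
    funext z
    simp [add_assoc]
  rw [h]

lemma image_shiftAut_rels (n : ℕ) (w : FG n) :
    (shiftAut n) '' rels n w = rels n w := by
  ext r
  constructor
  · rintro ⟨s, ⟨i, rfl⟩, rfl⟩
    exact ⟨i + 1, (shiftA_shiftA n 1 i w).symm⟩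
  · rintro ⟨i, rfl⟩
    refine ⟨shiftA n (i - 1) w, ⟨i - 1, rfl⟩, ?_⟩
    rw [shiftAut, shiftA_shiftA, sub_add_cancel]

lemma map_normalClosure_rels (n : ℕ) (w : FG n) :
    (Subgroup.normalClosure (rels n w)).map (shiftAut n).toMonoidHom
      = Subgroup.normalClosure (rels n w) := by
  rw [Subgroup.map_normalClosure (rels n w) (shiftAut n).toMonoidHom (shiftAut n).surjective]
  congr 1
  exact image_shiftAut_rels n w

/-- The shift automorphism `θ` of the cyclically presented group `G_n(w)`. -/
def shiftG (n : ℕ) (w : FG n) : MulAut (Gp n w) :=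
  QuotientGroup.congr (Subgroup.normalClosure (rels n w)) (Subgroup.normalClosure (rels n w))
    (shiftAut n) (map_normalClosure_rels n w)

/-- The generator `x_k` (subscript mod `n`). -/
def xg (n : ℕ) (k : ℤ) : FG n := FreeGroup.of (k : ZMod n)

/-- The word `x_0 x_k x_l`. -/
def wkl (n : ℕ) (k l : ℤ) : FG n := xg n 0 * xg n k * xg n l

/-- The cyclically presented group `G_n(k,l) = G_n(x_0 x_k x_l)`. -/
abbrev Gkl (n : ℕ) (k l : ℤ) := Gp n (wkl n k l)

/-- The shift automorphism of `G_n(k,l)`. -/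
def shiftKL (n : ℕ) (k l : ℤ) : MulAut (Gkl n k l) := shiftG n (wkl n k l)

end CPG



namespace S12Aux

lemma pow_mod_eq {M : Type*} [Monoid M] {x : M} {n : ℕ} (h : x ^ n = 1) (k : ℕ) :
    x ^ (k % n) = x ^ k := by
  conv_rhs => rw [← Nat.div_add_mod k n]
  rw [pow_add, pow_mul, h, one_pow, one_mul]

lemma shiftA_wkl (n : ℕ) (p : ℤ) (i : ZMod n) :
    CPG.shiftA n i (CPG.wkl n 0 p)
      = FreeGroup.of i * FreeGroup.of i * FreeGroup.of ((p : ZMod n) + i) := by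
  simp [CPG.shiftA, CPG.wkl, CPG.xg]

/-- The basic relation in `G_n(0,p)`. -/
lemma rel_G (n : ℕ) (p : ℤ) (i : ZMod n) :
    (PresentedGroup.of i : CPG.Gkl n 0 p) * PresentedGroup.of i
      * PresentedGroup.of ((p : ZMod n) + i) = 1 := by
  have h1 : (QuotientGroup.mk (CPG.shiftA n i (CPG.wkl n 0 p)) : CPG.Gkl n 0 p) = 1 := by
    rw [QuotientGroup.eq_one_iff]
    exact Subgroup.subset_normalClosure ⟨i, rfl⟩
  rw [shiftA_wkl] at h1
  exact h1

lemma rel_G' (n : ℕ) (p : ℤ) (i : ZMod n) :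
    (PresentedGroup.of ((p : ZMod n) + i) : CPG.Gkl n 0 p)
      = (PresentedGroup.of i : CPG.Gkl n 0 p) ^ (-2 : ℤ) := by
  have h := rel_G n p i
  have h2 : (PresentedGroup.of i : CPG.Gkl n 0 p) ^ (-2:ℤ)
      * ((PresentedGroup.of i * PresentedGroup.of i) * PresentedGroup.of ((p : ZMod n) + i))
      = PresentedGroup.of ((p : ZMod n) + i) := by group
  rw [h, mul_one] at h2
  exact h2.symm

lemma shiftKL_of (n : ℕ) (k l : ℤ) (i : ZMod n) :
    CPG.shiftKL n k l (PresentedGroup.of i : CPG.Gkl n k l) = PresentedGroup.of (i + 1) := by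
  have h0 : CPG.shiftKL n k l (QuotientGroup.mk (FreeGroup.of i))
      = QuotientGroup.mk (CPG.shiftAut n (FreeGroup.of i)) := rfl
  rw [show (PresentedGroup.of i : CPG.Gkl n k l) = QuotientGroup.mk (FreeGroup.of i) from rfl, h0]
  congr 1

end S12Aux

theorem statement12 (n : ℕ) (hn : 0 < n) (p : ℤ) (hp : Int.gcd p (n : ℤ) = 1)
    (s : ℕ) (hs : (s : ℤ) = 2 ^ n - (-1) ^ n) :
    IsCyclic (CPG.Gkl n 0 p) ∧ Nat.card (CPG.Gkl n 0 p) = s ∧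
    Subgroup.zpowers (PresentedGroup.of (0 : ZMod n) : CPG.Gkl n 0 p) = ⊤ ∧
    CPG.shiftKL n 0 p ((PresentedGroup.of (0 : ZMod n) : CPG.Gkl n 0 p) ^ (s / 3))
      = (PresentedGroup.of (0 : ZMod n) : CPG.Gkl n 0 p) ^ (s / 3) ∧
    orderOf ((PresentedGroup.of (0 : ZMod n) : CPG.Gkl n 0 p) ^ (s / 3)) = 3 := by
  haveI : NeZero n := ⟨hn.ne'⟩
  set g : CPG.Gkl n 0 p := PresentedGroup.of (0 : ZMod n) with hg
  -- basic number theory facts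
  have h1 : ((-1:ℤ))^n * (-1)^n = 1 := by
    rw [← pow_add, ← two_mul, pow_mul]; norm_num
  have hkey : (-2:ℤ)^n = (-1)^n * s + 1 := by
    have h2 : (-2:ℤ)^n = (-1)^n * 2^n := by rw [← neg_one_mul, mul_pow]
    rw [h2, hs]; linear_combination h1
  have h3sZ : (3:ℤ) ∣ (s:ℤ) := by
    rw [hs]
    have h : (2:ℤ) ≡ -1 [ZMOD 3] := by decide
    have := (h.pow n).dvd
    simpa using this.neg_right
  have h3s : 3 ∣ s := by exact_mod_cast h3sZ
  have hs_pos : 0 < s := by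
    rcases Nat.even_or_odd n with he | ho
    · have : ((-1:ℤ))^n = 1 := he.neg_one_pow
      have h2 : (2:ℤ) ≤ 2^n := by
        calc (2:ℤ) = 2^1 := by norm_num
        _ ≤ 2^n := by exact pow_le_pow_right₀ (by norm_num) hn
      have : (1:ℤ) ≤ (s:ℤ) := by rw [hs, this]; linarith
      exact_mod_cast (by linarith : (0:ℤ) < s)
    · have : ((-1:ℤ))^n = -1 := ho.neg_one_pow
      have h2 : (2:ℤ) ≤ 2^n := by
        calc (2:ℤ) = 2^1 := by norm_num
        _ ≤ 2^n := by exact pow_le_pow_right₀ (by norm_num) hn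
      have : (1:ℤ) ≤ (s:ℤ) := by rw [hs, this]; linarith
      exact_mod_cast (by linarith : (0:ℤ) < s)
  -- (-2) has n-th power 1 in ZMod s
  have h2s : (-2 : ZMod s)^n = 1 := by
    have := congrArg (Int.cast : ℤ → ZMod s) hkey
    push_cast at this
    rw [ZMod.natCast_self] at this
    simpa using this
  -- p is a unit mod n
  have hu : IsUnit ((p : ZMod n)) := by
    obtain ⟨a, b, hab⟩ := Int.isCoprime_iff_gcd_eq_one.mpr hp
    have h : ((a : ZMod n)) * (p : ZMod n) = 1 := by
      have := congrArg (Int.cast : ℤ → ZMod n) hab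
      push_cast at this
      simpa [ZMod.natCast_self] using this
    exact IsUnit.of_mul_eq_one _ (by rw [mul_comm] at h; exact h)
  set u := hu.unit with hu'
  have hup : (u : ZMod n) = (p : ZMod n) := hu.unit_spec
  -- the exponent function
  set E : ZMod n → ZMod s := fun a => (-2 : ZMod s) ^ a.val with hE
  have hEadd : ∀ a b : ZMod n, E (a + b) = E a * E b := by
    intro a b
    simp only [hE]
    rw [ZMod.val_add, S12Aux.pow_mod_eq h2s, pow_add]
  have hE1 : E 1 = -2 := by
    simp only [hE]
    rw [show (1 : ZMod n) = ((1:ℕ) : ZMod n) by norm_num, ZMod.val_natCast,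
      S12Aux.pow_mod_eq h2s, pow_one]
  have hE0 : E 0 = 1 := by simp [hE, ZMod.val_zero]
  -- the homomorphism to Multiplicative (ZMod s)
  set f : ZMod n → Multiplicative (ZMod s) :=
    fun i => Multiplicative.ofAdd (E (i * ((u⁻¹ : (ZMod n)ˣ) : ZMod n))) with hf
  have hrels : ∀ r ∈ CPG.rels n (CPG.wkl n 0 p), FreeGroup.lift f r = 1 := by
    rintro r ⟨i, rfl⟩
    show FreeGroup.lift f (CPG.shiftA n i (CPG.wkl n 0 p)) = 1
    rw [S12Aux.shiftA_wkl]
    have hfrel : f i * f i * f ((p : ZMod n) + i) = 1 := by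
      simp only [hf, ← ofAdd_add]
      rw [← ofAdd_zero]
      congr 1
      have : ((p : ZMod n) + i) * ((u⁻¹ : (ZMod n)ˣ) : ZMod n)
          = 1 + i * ((u⁻¹ : (ZMod n)ˣ) : ZMod n) := by
        rw [add_mul, ← hup]
        congr 1
        rw [← Units.val_mul, mul_inv_cancel, Units.val_one]
      rw [this, hEadd, hE1]
      ring
    simpa using hfrel
  set φ : CPG.Gkl n 0 p →* Multiplicative (ZMod s) := PresentedGroup.toGroup hrels with hφ
  have hφg : φ g = Multiplicative.ofAdd (1 : ZMod s) := by
    rw [hg, hφ, PresentedGroup.toGroup.of, hf]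
    simp only [zero_mul, hE0]
  -- powers of g
  have hpow : ∀ j : ℕ, (PresentedGroup.of (((j:ℕ) : ZMod n) * (p : ZMod n)) : CPG.Gkl n 0 p)
      = g ^ ((-2:ℤ)^j) := by
    intro j
    induction j with
    | zero => simp [hg]
    | succ j ih =>
      have hidx : (((j+1:ℕ) : ZMod n)) * (p : ZMod n)
          = (p : ZMod n) + ((j:ℕ) : ZMod n) * (p : ZMod n) := by push_cast; ring
      rw [hidx, S12Aux.rel_G', ih, ← zpow_mul, pow_succ]
  have hofi : ∀ i : ZMod n, (PresentedGroup.of i : CPG.Gkl n 0 p)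
      = g ^ ((-2:ℤ)^((i * ((u⁻¹ : (ZMod n)ˣ) : ZMod n)).val)) := by
    intro i
    have hidx : ((((i * ((u⁻¹ : (ZMod n)ˣ) : ZMod n)).val : ℕ) : ZMod n)) * (p : ZMod n) = i := by
      rw [ZMod.natCast_zmod_val, ← hup, mul_assoc, ← Units.val_mul, inv_mul_cancel,
        Units.val_one, mul_one]
    have h := hpow ((i * ((u⁻¹ : (ZMod n)ˣ) : ZMod n)).val)
    rwa [hidx] at h
  -- generation
  have hgen : Subgroup.zpowers g = ⊤ := by
    rw [eq_top_iff, ← PresentedGroup.closure_range_of (CPG.rels n (CPG.wkl n 0 p))]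
    rw [Subgroup.closure_le]
    rintro x ⟨i, rfl⟩
    rw [hofi i]
    exact Subgroup.zpow_mem _ (Subgroup.mem_zpowers g) _
  -- g ^ s = 1
  have hgn : g = g ^ ((-2:ℤ)^n) := by
    have := hpow n
    rwa [ZMod.natCast_self, zero_mul, ← hg] at this
  have hgs1 : g ^ ((-1:ℤ)^n * s) = 1 := by
    have : g ^ ((-2:ℤ)^n - 1) = 1 := by
      rw [zpow_sub, ← hgn, zpow_one, mul_inv_cancel]
    rwa [show ((-2:ℤ)^n - 1) = (-1:ℤ)^n * s by linarith [hkey]] at this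
  have hgs : g ^ (s:ℤ) = 1 := by
    calc g ^ (s:ℤ) = g ^ (((-1:ℤ)^n * s) * (-1:ℤ)^n) := by
          rw [mul_comm ((-1:ℤ)^n) (s:ℤ), mul_assoc, h1, mul_one]
    _ = (g ^ ((-1:ℤ)^n * s)) ^ ((-1:ℤ)^n) := by rw [zpow_mul]
    _ = 1 := by rw [hgs1, one_zpow]
  -- order of g
  have horder : orderOf g = s := by
    apply Nat.dvd_antisymm
    · apply orderOf_dvd_of_pow_eq_one
      have := hgs
      rwa [zpow_natCast] at this
    · have h1' : orderOf (φ g) ∣ orderOf g := orderOf_map_dvd φ g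
      rwa [hφg, orderOf_ofAdd_eq_addOrderOf, ZMod.addOrderOf_one] at h1'
  -- the shift fixes g^(s/3)
  have hof1 : (PresentedGroup.of (1 : ZMod n) : CPG.Gkl n 0 p)
      = g ^ ((-2:ℤ)^(((1 : ZMod n) * ((u⁻¹ : (ZMod n)ˣ) : ZMod n)).val)) := hofi 1
  set m : ℤ := (-2:ℤ)^(((1 : ZMod n) * ((u⁻¹ : (ZMod n)ˣ) : ZMod n)).val) with hm
  have h3m : (3:ℤ) ∣ m - 1 := by
    have h : (-2:ℤ) ≡ 1 [ZMOD 3] := by decide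
    have := (h.pow (((1 : ZMod n) * ((u⁻¹ : (ZMod n)ˣ) : ZMod n)).val)).dvd
    simpa [hm] using this.neg_right
  have hfix : CPG.shiftKL n 0 p (g ^ (s / 3)) = g ^ (s / 3) := by
    rw [map_pow, hg, S12Aux.shiftKL_of, zero_add, ← hg, hof1]
    rw [← zpow_natCast (g ^ m), ← zpow_mul, ← zpow_natCast g]
    rw [zpow_eq_zpow_iff_modEq, horder, Int.modEq_iff_dvd]
    obtain ⟨t, ht⟩ := h3m
    have hcast : (3:ℤ) * ((s/3 : ℕ) : ℤ) = (s:ℤ) := by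
      exact_mod_cast congrArg (Nat.cast : ℕ → ℤ) (Nat.mul_div_cancel' h3s)
    refine ⟨-t, ?_⟩
    linear_combination (-((s/3:ℕ):ℤ)) * ht - t * hcast
  have hmem : ∀ x : CPG.Gkl n 0 p, x ∈ Subgroup.zpowers g := by
    intro x; rw [hgen]; exact Subgroup.mem_top x
  have hcyc : IsCyclic (CPG.Gkl n 0 p) := ⟨⟨g, hmem⟩⟩
  have hcard : Nat.card (CPG.Gkl n 0 p) = s := by
    rw [← horder, ← Nat.card_zpowers, hgen]
    exact Subgroup.card_top.symm
  have horder3 : orderOf (g ^ (s/3)) = 3 := by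
    have hn3 : s / 3 ≠ 0 := by
      have : 3 * (s/3) = s := Nat.mul_div_cancel' h3s
      intro h0; rw [h0, mul_zero] at this; exact hs_pos.ne' this.symm
    rw [orderOf_pow' _ hn3, horder]
    have hdvd : s/3 ∣ s := Nat.div_dvd_of_dvd h3s
    have hgcd : Nat.gcd s (s/3) = s/3 := Nat.gcd_eq_right hdvd
    rw [hgcd]
    exact Nat.div_div_self h3s hs_pos.ne'
  exact ⟨hcyc, hcard, hgen, hfix, horder3⟩
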